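/- (Robustness in model M3.) Suppose δ^D(x) ≠ 0 for every x ∈ 𝒳, and let δD* : 𝒳 → ℝ be an arbitrary nonvanishing function and pY*, pD* : 𝒳 → ℝ arbitrary functions (possibly misspecified). Then Φ(f, δ, δD*, pY*, pD*) = Δ, where f is the true conditional instrument density and δ is the true conditional Wald estimand. -/

import Mathlib

open MeasureTheory

/-- Conditional mean of `W` given event `A`: `E[W | A] = (∫_A W dμ) / μ(A)`. -/
noncomputable def condMean {Ω : Type*} [MeasurableSpace Ω] (μ : Measure Ω)
    (W : Ω → ℝ) (A : Set Ω) : ℝ :=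
  (∫ ω in A, W ω ∂μ) / (μ A).toReal

/-- The multiply robust functional
`Φ(f*, δ*, δD*, pY*, pD*) = E[ ((2Z−1)/f*(Z,X)) (1/δD*(X))
  (Y − pY*(X) − D δ*(X) + pD*(X) δ*(X)) + δ*(X) ]`. -/
noncomputable def mrFunctional {Ω 𝒳 : Type*} [MeasurableSpace Ω] (μ : Measure Ω)
    (Z D Y : Ω → ℝ) (X : Ω → 𝒳)
    (fs : ℝ → 𝒳 → ℝ) (δs δDs pYs pDs : 𝒳 → ℝ) : ℝ :=
  ∫ ω, ((2 * Z ω - 1) / fs (Z ω) (X ω)) * (1 / δDs (X ω)) *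
      (Y ω - pYs (X ω) - D ω * δs (X ω) + pDs (X ω) * δs (X ω)) + δs (X ω) ∂μ

/-- robustness in model `M3`: with the true instrument density `f`
and the true conditional Wald estimand `δ`, but an arbitrary nonvanishing
(possibly misspecified) `δD*` and arbitrary `pY*, pD*`, the multiply robust
functional recovers the average Wald estimand: `Φ(f, δ, δD*, pY*, pD*) = Δ`. -/
theorem mr_robust_M3
    {Ω : Type*} [MeasurableSpace Ω] (μ : Measure Ω) [IsProbabilityMeasure μ]
    {𝒳 : Type*} [Fintype 𝒳] [MeasurableSpace 𝒳] [MeasurableSingletonClass 𝒳]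
    (Z D Y : Ω → ℝ) (X : Ω → 𝒳)
    (hZmeas : Measurable Z) (hDmeas : Measurable D) (hXmeas : Measurable X)
    (hYmeas : Measurable Y)
    (hZ01 : ∀ ω, Z ω = 0 ∨ Z ω = 1) (hD01 : ∀ ω, D ω = 0 ∨ D ω = 1)
    (hYint : Integrable Y μ)
    -- positivity
    (hPos : ∀ (z : ℝ), (z = 0 ∨ z = 1) → ∀ (x : 𝒳),
      0 < μ ({ω | Z ω = z} ∩ {ω | X ω = x}))
    -- f(z | x) = μ(Z = z | X = x)
    (f : ℝ → 𝒳 → ℝ)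
    (hf : ∀ (z : ℝ) (x : 𝒳),
      f z x = (μ ({ω | Z ω = z} ∩ {ω | X ω = x})).toReal / (μ {ω | X ω = x}).toReal)
    -- p_z^Y, p_z^D, δ^Y, δ^D, and the conditional Wald estimand δ
    (pY pD : ℝ → 𝒳 → ℝ)
    (hpY : ∀ (z : ℝ) (x : 𝒳),
      pY z x = condMean μ Y ({ω | Z ω = z} ∩ {ω | X ω = x}))
    (hpD : ∀ (z : ℝ) (x : 𝒳),
      pD z x = condMean μ D ({ω | Z ω = z} ∩ {ω | X ω = x}))
    (δY δD δ : 𝒳 → ℝ)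
    (hδY : ∀ x, δY x = pY 1 x - pY 0 x)
    (hδD : ∀ x, δD x = pD 1 x - pD 0 x)
    (hδDne : ∀ x, δD x ≠ 0)
    (hδ : ∀ x, δ x = δY x / δD x)
    -- the average Wald estimand
    (Δ : ℝ) (hΔ : Δ = ∑ x : 𝒳, (μ {ω | X ω = x}).toReal * δ x)
    -- arbitrary candidate nuisance functions, with δD* nonvanishing
    (δDs : 𝒳 → ℝ) (hδDs : ∀ x, δDs x ≠ 0)
    (pYs pDs : 𝒳 → ℝ) :
    mrFunctional μ Z D Y X f δ δDs pYs pDs = Δ := by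
  classical
  -- named sets and measures
  set A : ℝ → 𝒳 → Set Ω := fun z x => {ω | Z ω = z} ∩ {ω | X ω = x} with hA
  have hAmeas : ∀ (z : ℝ) (x : 𝒳), MeasurableSet (A z x) := fun z x =>
    (hZmeas (measurableSet_singleton z)).inter (hXmeas (measurableSet_singleton x))
  set a : ℝ → 𝒳 → ℝ := fun z x => (μ (A z x)).toReal with ha
  set m : 𝒳 → ℝ := fun x => (μ {ω | X ω = x}).toReal with hm
  have hapos : ∀ (z : ℝ), (z = 0 ∨ z = 1) → ∀ x, 0 < a z x := fun z hz x =>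
    ENNReal.toReal_pos (hPos z hz x).ne' (measure_ne_top μ _)
  have hmpos : ∀ x, 0 < m x := fun x =>
    lt_of_lt_of_le (hapos 1 (Or.inr rfl) x)
      (ENNReal.toReal_mono (measure_ne_top μ _) (measure_mono Set.inter_subset_right))
  have hfa : ∀ (z : ℝ), (z = 0 ∨ z = 1) → ∀ x, a z x = f z x * m x := by
    intro z hz x
    rw [hf z x]
    field_simp [(hmpos x).ne']
    exact (mul_div_cancel_right₀ _ (hmpos x).ne').symm
  have hfpos : ∀ (z : ℝ), (z = 0 ∨ z = 1) → ∀ x, 0 < f z x := by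
    intro z hz x
    rw [hf z x]
    exact div_pos (hapos z hz x) (hmpos x)
  -- conditional means as set integrals
  have hIntY : ∀ (z : ℝ), (z = 0 ∨ z = 1) → ∀ x,
      ∫ ω in A z x, Y ω ∂μ = pY z x * a z x := by
    intro z hz x
    rw [hpY z x]
    unfold condMean
    rw [div_mul_cancel₀ _ (hapos z hz x).ne']
  have hIntD : ∀ (z : ℝ), (z = 0 ∨ z = 1) → ∀ x,
      ∫ ω in A z x, D ω ∂μ = pD z x * a z x := by
    intro z hz x
    rw [hpD z x]
    unfold condMean
    rw [div_mul_cancel₀ _ (hapos z hz x).ne']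
  -- D is integrable
  have hDint : Integrable D μ := by
    refine (integrable_const (1 : ℝ)).mono' hDmeas.aestronglyMeasurable ?_
    filter_upwards with ω
    rcases hD01 ω with h | h <;> simp [h]
  -- the coefficient and the per-cell integrand
  set c : ℝ → 𝒳 → ℝ := fun z x => (2 * z - 1) / f z x * (1 / δDs x) with hc
  set h : ℝ → 𝒳 → Ω → ℝ := fun z x ω =>
    c z x * (Y ω - pYs x - D ω * δ x + pDs x * δ x) + δ x with hh
  have hEint : ∀ (x : 𝒳), Integrable (fun ω => Y ω - pYs x - D ω * δ x + pDs x * δ x) μ :=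
    fun x => (((hYint.sub (integrable_const _)).sub (hDint.mul_const _)).add
      (integrable_const _))
  have hhint : ∀ (z : ℝ) (x : 𝒳), Integrable (h z x) μ := fun z x =>
    (((hEint x).const_mul _).add (integrable_const _))
  -- pointwise decomposition of the integrand
  have hpt : ∀ ω, ((2 * Z ω - 1) / f (Z ω) (X ω)) * (1 / δDs (X ω)) *
      (Y ω - pYs (X ω) - D ω * δ (X ω) + pDs (X ω) * δ (X ω)) + δ (X ω)
      = ∑ x : 𝒳, ((A 1 x).indicator (h 1 x) + (A 0 x).indicator (h 0 x)) ω := by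
    intro ω
    simp only [Pi.add_apply]
    rw [Finset.sum_eq_single (X ω)]
    · rcases hZ01 ω with h0 | h1
      · have hmem : ω ∈ A 0 (X ω) := ⟨h0, rfl⟩
        have hnmem : ω ∉ A 1 (X ω) := by
          intro hx
          rw [hA] at hx
          have : Z ω = 1 := hx.1
          rw [h0] at this
          exact zero_ne_one this
        rw [Set.indicator_of_mem hmem, Set.indicator_of_notMem hnmem, hh, hc, h0]
        ring
      · have hmem : ω ∈ A 1 (X ω) := ⟨h1, rfl⟩
        have hnmem : ω ∉ A 0 (X ω) := by
          intro hx
          rw [hA] at hx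
          have : Z ω = 0 := hx.1
          rw [h1] at this
          exact one_ne_zero this
        rw [Set.indicator_of_mem hmem, Set.indicator_of_notMem hnmem, hh, hc, h1]
        ring
    · intro x _ hx
      have hn1 : ω ∉ A 1 x := fun hmem => hx hmem.2.symm
      have hn0 : ω ∉ A 0 x := fun hmem => hx hmem.2.symm
      rw [Set.indicator_of_notMem hn1, Set.indicator_of_notMem hn0, add_zero]
    · intro hx
      exact absurd (Finset.mem_univ (X ω)) hx
  -- compute the set integrals
  have hset : ∀ (z : ℝ), (z = 0 ∨ z = 1) → ∀ x,
      ∫ ω in A z x, h z x ω ∂μ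
        = c z x * (pY z x * a z x - pYs x * a z x - pD z x * a z x * δ x
            + pDs x * δ x * a z x) + δ x * a z x := by
    intro z hz x
    have hE : Integrable (fun ω => Y ω - pYs x - D ω * δ x + pDs x * δ x)
        (μ.restrict (A z x)) := (hEint x).integrableOn
    have h2 : Integrable (fun ω => Y ω - pYs x - D ω * δ x) (μ.restrict (A z x)) :=
      (hYint.integrableOn.sub (integrable_const _)).sub ((hDint.mul_const _).integrableOn)
    have h3 : Integrable (fun ω => Y ω - pYs x) (μ.restrict (A z x)) :=
      hYint.integrableOn.sub (integrable_const _)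
    have h4 : Integrable (fun ω => D ω * δ x) (μ.restrict (A z x)) :=
      (hDint.mul_const _).integrableOn
    rw [hh]
    simp only
    rw [integral_add (hE.const_mul _) (integrable_const _)]
    rw [integral_const_mul]
    rw [integral_add h2 (integrable_const _)]
    rw [integral_sub h3 h4]
    rw [integral_sub hYint.integrableOn (integrable_const _)]
    rw [integral_mul_const]
    rw [hIntY z hz x, hIntD z hz x, setIntegral_const, setIntegral_const, setIntegral_const]
    simp only [smul_eq_mul, ha, Measure.real]
    ring
  -- additivity over Z within each X-fiber
  have hsplit : ∀ x, a 1 x + a 0 x = m x := by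
    intro x
    have hdisj : Disjoint (A 1 x) (A 0 x) := by
      rw [Set.disjoint_left]
      rintro ω ⟨h1, -⟩ ⟨h0, -⟩
      have h1' : Z ω = 1 := h1
      have h0' : Z ω = 0 := h0
      rw [h1'] at h0'
      exact one_ne_zero h0'
    have hunion : A 1 x ∪ A 0 x = {ω | X ω = x} := by
      ext ω
      constructor
      · rintro (⟨-, hx⟩ | ⟨-, hx⟩) <;> exact hx
      · intro hx
        rcases hZ01 ω with h0 | h1
        · exact Or.inr ⟨h0, hx⟩
        · exact Or.inl ⟨h1, hx⟩
    have key : μ {ω | X ω = x} = μ (A 1 x) + μ (A 0 x) := by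
      rw [← hunion]; exact measure_union hdisj (hAmeas 0 x)
    show (μ (A 1 x)).toReal + (μ (A 0 x)).toReal = (μ {ω | X ω = x}).toReal
    rw [key, ENNReal.toReal_add (measure_ne_top μ _) (measure_ne_top μ _)]
  -- the main computation
  have hmain : mrFunctional μ Z D Y X f δ δDs pYs pDs
      = ∑ x : 𝒳, ((∫ ω in A 1 x, h 1 x ω ∂μ) + (∫ ω in A 0 x, h 0 x ω ∂μ)) := by
    unfold mrFunctional
    rw [integral_congr_ae (Filter.Eventually.of_forall hpt)]
    rw [integral_finset_sum _ (fun x _ =>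
      ((hhint 1 x).indicator (hAmeas 1 x)).add ((hhint 0 x).indicator (hAmeas 0 x)))]
    refine Finset.sum_congr rfl (fun x _ => ?_)
    simp only [Pi.add_apply]
    rw [integral_add ((hhint 1 x).indicator (hAmeas 1 x)) ((hhint 0 x).indicator (hAmeas 0 x)),
      integral_indicator (hAmeas 1 x), integral_indicator (hAmeas 0 x)]
  rw [hmain, hΔ]
  refine Finset.sum_congr rfl (fun x _ => ?_)
  rw [hset 1 (Or.inr rfl) x, hset 0 (Or.inl rfl) x]
  have hkey : δ x * (pD 1 x - pD 0 x) = pY 1 x - pY 0 x := by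
    rw [hδ x, hδY x, hδD x, div_mul_cancel₀ _ (by rw [← hδD x]; exact hδDne x)]
  have hf1 := (hfpos 1 (Or.inr rfl) x).ne'
  have hf0 := (hfpos 0 (Or.inl rfl) x).ne'
  have hca1 : c 1 x * a 1 x = m x / δDs x := by
    rw [hc]
    simp only
    rw [hfa 1 (Or.inr rfl) x]
    field_simp [hf1, hδDs x]
    ring
  have hca0 : c 0 x * a 0 x = -(m x / δDs x) := by
    rw [hc]
    simp only
    rw [hfa 0 (Or.inl rfl) x]
    field_simp [hf0, hδDs x]
    ring
  have hmx : (μ {ω | X ω = x}).toReal = m x := rfl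
  rw [hmx]
  linear_combination (pY 1 x - pYs x - pD 1 x * δ x + pDs x * δ x) * hca1
    + (pY 0 x - pYs x - pD 0 x * δ x + pDs x * δ x) * hca0
    + δ x * (hsplit x) - (m x / δDs x) * hkey
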